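/- Let V be a complex vector space and ω : V × V → ℂ a skew-Hermitian sesquilinear form. Let p ≥ 1 and let f'_1,…,f'_p, g'_1,…,g'_p, f''_1,…,f''_p, g''_1,…,g''_p ∈ V satisfy: ω(f'_i, f'_j) = 2i·δ_{ij} = ω(f''_i, f''_j), ω(g'_i, g'_j) = −2i·δ_{ij} = ω(g''_i, g''_j), and all other pairings among these 4p vectors vanish (ω(f'_i, g'_j) = ω(g'_i, f'_j) = ω(f''_i, g''_j) = ω(g''_i, f''_j) = 0 and every pairing of a primed vector with a double-primed vector is 0). Let ζ_1,…,ζ_p ∈ ℂ with |ζ_i| = 1 for all i. Then the 2p vectors u_i = ζ_i f'_i + g''_i and v_i = g'_i + ζ_i f''_i (i = 1,…,p) are linearly independent and their span N is an isotropic subspace of dimension 2p. -/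

import Mathlib

open Complex

/-- The subspace of matching solutions supported on the linking rays: the
vectors `u i = ζ i • f' i + g'' i` and `v i = g' i + ζ i • f'' i` are linearly
independent and span a `2p`-dimensional isotropic subspace. -/
theorem matching_subspace_isotropic
    {V : Type*} [AddCommGroup V] [Module ℂ V]
    (ω : V →ₗ⋆[ℂ] V →ₗ[ℂ] ℂ)
    (hskew : ∀ x y : V, (starRingEnd ℂ) (ω x y) = - ω y x)
    (p : ℕ) (hp : 1 ≤ p)
    (f' g' f'' g'' : Fin p → V)
    (hf'f' : ∀ i j, ω (f' i) (f' j) = 2 * Complex.I * (if i = j then 1 else 0))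
    (hf''f'' : ∀ i j, ω (f'' i) (f'' j) = 2 * Complex.I * (if i = j then 1 else 0))
    (hg'g' : ∀ i j, ω (g' i) (g' j) = -(2 * Complex.I * (if i = j then 1 else 0)))
    (hg''g'' : ∀ i j, ω (g'' i) (g'' j) = -(2 * Complex.I * (if i = j then 1 else 0)))
    (hf'g' : ∀ i j, ω (f' i) (g' j) = 0) (hg'f' : ∀ i j, ω (g' i) (f' j) = 0)
    (hf''g'' : ∀ i j, ω (f'' i) (g'' j) = 0) (hg''f'' : ∀ i j, ω (g'' i) (f'' j) = 0)
    (hf'f'' : ∀ i j, ω (f' i) (f'' j) = 0) (hf''f' : ∀ i j, ω (f'' i) (f' j) = 0)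
    (hf'g'' : ∀ i j, ω (f' i) (g'' j) = 0) (hg''f' : ∀ i j, ω (g'' i) (f' j) = 0)
    (hg'f'' : ∀ i j, ω (g' i) (f'' j) = 0) (hf''g' : ∀ i j, ω (f'' i) (g' j) = 0)
    (hg'g'' : ∀ i j, ω (g' i) (g'' j) = 0) (hg''g' : ∀ i j, ω (g'' i) (g' j) = 0)
    (ζ : Fin p → ℂ) (hζ : ∀ i, ‖ζ i‖ = 1)
    (u v : Fin p → V)
    (hu : ∀ i, u i = ζ i • f' i + g'' i)
    (hv : ∀ i, v i = g' i + ζ i • f'' i) :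
    LinearIndependent ℂ (Sum.elim u v) ∧
    (∀ x ∈ Submodule.span ℂ (Set.range (Sum.elim u v)),
      ∀ y ∈ Submodule.span ℂ (Set.range (Sum.elim u v)), ω x y = 0) ∧
    Module.finrank ℂ (Submodule.span ℂ (Set.range (Sum.elim u v))) = 2 * p := by

  -- basic facts about ζ
  have hζne : ∀ i, ζ i ≠ 0 := by
    intro i h
    have := hζ i
    rw [h] at this
    simp at this
  have hconj : ∀ i, (starRingEnd ℂ) (ζ i) * ζ i = 1 := by
    intro i
    have h1 : (starRingEnd ℂ) (ζ i) * ζ i = (Complex.normSq (ζ i) : ℂ) := by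
      rw [mul_comm, Complex.mul_conj]
    rw [h1, Complex.normSq_eq_norm_sq, hζ i]
    norm_num
  -- pairwise vanishing of ω on generators
  have hωuu : ∀ i j, ω (u i) (u j) = 0 := by
    intro i j
    simp only [hu, map_add, map_smulₛₗ, LinearMap.add_apply, LinearMap.smul_apply,
      hf'f', hg''g'', hf'g'', hg''f', smul_eq_mul]
    by_cases h : i = j
    · subst h
      simp only [eq_self_iff_true, if_true, mul_one, RingHom.id_apply]
      linear_combination (2 * Complex.I) * hconj i
    · simp [h]
  have hωvv : ∀ i j, ω (v i) (v j) = 0 := by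
    intro i j
    simp only [hv, map_add, map_smulₛₗ, LinearMap.add_apply, LinearMap.smul_apply,
      hg'g', hf''f'', hg'f'', hf''g', smul_eq_mul]
    by_cases h : i = j
    · subst h
      simp only [eq_self_iff_true, if_true, mul_one, RingHom.id_apply]
      linear_combination (2 * Complex.I) * hconj i
    · simp [h]
  have hωuv : ∀ i j, ω (u i) (v j) = 0 := by
    intro i j
    simp only [hu, hv, map_add, map_smulₛₗ, LinearMap.add_apply, LinearMap.smul_apply,
      hf'g', hf'f'', hg''g', hg''f'', smul_eq_mul]
    ring
  have hωvu : ∀ i j, ω (v i) (u j) = 0 := by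
    intro i j
    simp only [hu, hv, map_add, map_smulₛₗ, LinearMap.add_apply, LinearMap.smul_apply,
      hg'f', hg'g'', hf''f', hf''g'', smul_eq_mul]
    ring
  have hgen : ∀ a b : Fin p ⊕ Fin p, ω (Sum.elim u v a) (Sum.elim u v b) = 0 := by
    rintro (i | i) (j | j) <;> simp [hωuu, hωuv, hωvu, hωvv]
  -- linear independence
  have hli : LinearIndependent ℂ (Sum.elim u v) := by
    rw [Fintype.linearIndependent_iff]
    intro g hg
    have h1 : ∀ j : Fin p, g (Sum.inl j) = 0 := by
      intro j
      have hc := congrArg (fun x => ω (f' j) x) hg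
      simp only [map_sum, map_smul, map_zero, Fintype.sum_sum_type, Sum.elim_inl,
        Sum.elim_inr, hu, hv, map_add, hf'f', hf'g', hf'f'', hf'g'', smul_eq_mul,
        smul_add, smul_zero, add_zero, mul_zero, zero_add, mul_ite, mul_one,
        Finset.sum_ite_eq, Finset.mem_univ, if_true] at hc
      simp only [Finset.sum_const_zero, add_zero, zero_add] at hc
      have hne : ζ j * (2 * Complex.I) ≠ 0 :=
        mul_ne_zero (hζne j) (by norm_num [Complex.I_ne_zero])
      exact (mul_eq_zero.mp hc).resolve_right hne
    have h2 : ∀ j : Fin p, g (Sum.inr j) = 0 := by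
      intro j
      have hc := congrArg (fun x => ω (f'' j) x) hg
      simp only [map_sum, map_smul, map_zero, Fintype.sum_sum_type, Sum.elim_inl,
        Sum.elim_inr, hu, hv, map_add, hf''f'', hf''g'', hf''f', hf''g', smul_eq_mul,
        smul_add, smul_zero, add_zero, mul_zero, zero_add, mul_ite, mul_one,
        Finset.sum_ite_eq, Finset.mem_univ, if_true] at hc
      simp only [Finset.sum_const_zero, add_zero, zero_add] at hc
      have hne : ζ j * (2 * Complex.I) ≠ 0 :=
        mul_ne_zero (hζne j) (by norm_num [Complex.I_ne_zero])
      exact (mul_eq_zero.mp hc).resolve_right hne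
    rintro (j | j)
    · exact h1 j
    · exact h2 j
  refine ⟨hli, ?_, ?_⟩
  · intro x hx y hy
    induction hx using Submodule.span_induction with
    | mem x hx =>
      induction hy using Submodule.span_induction with
      | mem y hy =>
        obtain ⟨a, rfl⟩ := hx
        obtain ⟨b, rfl⟩ := hy
        exact hgen a b
      | zero => simp
      | add y z hy hz ihy ihz => simp [ihy, ihz]
      | smul c y hy ihy => simp [ihy]
    | zero => simp
    | add x z hx hz ihx ihz => simp [map_add, LinearMap.add_apply, ihx, ihz]
    | smul c x hx ihx => simp [map_smulₛₗ, ihx]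
  · rw [finrank_span_eq_card hli]
    simp [two_mul]
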